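/- Let A(1) ≠ A(2) be two obligors and z ∈ [0,1]. Then E[D_{A(1)} D_{A(2)} · z^X] = E[p_{A(1)}^S p_{A(2)}^S · z^X] · H_{A(1)}(z) · H_{A(2)}(z). -/

import Mathlib

open MeasureTheory ProbabilityTheory Real Finset
open scoped ENNReal NNReal

section AUX

lemma CR_tsum_pi_fin : ∀ (n : ℕ) (F : Fin n → ℕ → ℝ≥0∞),
    ∑' d : Fin n → ℕ, ∏ i, F i (d i) = ∏ i, ∑' m, F i m := by
  intro n
  induction n with
  | zero =>
    intro F
    simp only [Finset.univ_eq_empty, Finset.prod_empty]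
    exact tsum_eq_single (fun i => i.elim0) (fun b hb => absurd (Subsingleton.elim b _) hb)
  | succ n ih =>
    intro F
    rw [← (Fin.consEquiv (fun _ : Fin (n + 1) => ℕ)).tsum_eq]
    have key : ∀ c : ℕ × (Fin n → ℕ),
        (∏ i, F i (((Fin.consEquiv (fun _ : Fin (n + 1) => ℕ)) c) i)) = F 0 c.1 * ∏ i, F i.succ (c.2 i) := by
      intro c
      rw [Fin.prod_univ_succ]
      simp [Fin.consEquiv]
    simp_rw [key]
    rw [ENNReal.tsum_prod (f := fun (a : ℕ) (b : Fin n → ℕ) => F 0 a * ∏ i : Fin n, F i.succ (b i))]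
    rw [Fin.prod_univ_succ]
    simp_rw [ENNReal.tsum_mul_left, ENNReal.tsum_mul_right]
    rw [ih (fun i => F i.succ)]

lemma CR_tsum_pi {𝒜 : Type} [Fintype 𝒜] (F : 𝒜 → ℕ → ℝ≥0∞) :
    ∑' d : 𝒜 → ℕ, ∏ A, F A (d A) = ∏ A, ∑' n, F A n := by
  classical
  set e : 𝒜 ≃ Fin (Fintype.card 𝒜) := Fintype.equivFin 𝒜
  rw [← (Equiv.arrowCongr e.symm (Equiv.refl ℕ)).tsum_eq]
  have key : ∀ c : Fin (Fintype.card 𝒜) → ℕ,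
      (∏ A, F A ((Equiv.arrowCongr e.symm (Equiv.refl ℕ) c) A))
        = ∏ i, F (e.symm i) (c i) := by
    intro c
    rw [← Equiv.prod_comp e.symm (fun A => F A (Equiv.arrowCongr e.symm (Equiv.refl ℕ) c A))]
    refine Finset.prod_congr rfl fun i _ => ?_
    simp [Equiv.arrowCongr]
  simp_rw [key]
  rw [CR_tsum_pi_fin _ (fun i => F (e.symm i))]
  exact Equiv.prod_comp e.symm (fun A => ∑' m, F A m)

lemma CR_lintegral_prod {Ω ι : Type*} [MeasurableSpace Ω] {P : Measure Ω}
    {β : ι → Type*} (m : ∀ i, MeasurableSpace (β i)) (f : ∀ i, Ω → β i)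
    (hindep : iIndepFun (m := m) f P) (hf : ∀ i, Measurable (f i))
    (g : ∀ i, β i → ℝ≥0∞) (hg : ∀ i, Measurable (g i)) (T : Finset ι) :
    ∫⁻ ω, ∏ i ∈ T, g i (f i ω) ∂P = ∏ i ∈ T, ∫⁻ ω, g i (f i ω) ∂P := by
  classical
  have : IsProbabilityMeasure P := hindep.isProbabilityMeasure
  induction T using Finset.induction_on with
  | empty => simp
  | insert i s hi ih =>
    simp only [Finset.prod_insert hi]
    have hDisj : Disjoint ({i} : Finset ι) s := Finset.disjoint_singleton_left.mpr hi
    have hIF := hindep.indepFun_finset {i} s hDisj hf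
    set φ : (∀ j : ({i} : Finset ι), β j) → ℝ≥0∞ :=
      fun v => g i (v ⟨i, Finset.mem_singleton_self i⟩) with hφ
    set ψ : (∀ j : (s : Finset ι), β j) → ℝ≥0∞ :=
      fun v => ∏ j : (s : Finset ι), g j.1 (v j) with hψ
    have hφm : Measurable φ := (hg i).comp (measurable_pi_apply _)
    have hψm : Measurable ψ := by
      apply Finset.measurable_prod
      intro j _
      exact (hg j.1).comp (measurable_pi_apply _)
    have hIF2 : IndepFun (fun ω => g i (f i ω)) (fun ω => ∏ j ∈ s, g j (f j ω)) P := by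
      have h := hIF.comp hφm hψm
      have e2 : (ψ ∘ fun a (j : (s : Finset ι)) => f j a)
          = fun ω => ∏ j ∈ s, g j (f j ω) := by
        funext ω
        exact Finset.prod_coe_sort s (fun j => g j (f j ω))
      rw [e2] at h
      exact h
    have hmeas1 : Measurable fun ω => g i (f i ω) := (hg i).comp (hf i)
    have hmeas2 : Measurable fun ω => ∏ j ∈ s, g j (f j ω) :=
      Finset.measurable_prod _ (fun j _ => (hg j).comp (hf j))
    calc ∫⁻ ω, g i (f i ω) * ∏ j ∈ s, g j (f j ω) ∂P
        = ∫⁻ ω, ((fun ω => g i (f i ω)) * fun ω => ∏ j ∈ s, g j (f j ω)) ω ∂P := by rfl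
      _ = (∫⁻ ω, g i (f i ω) ∂P) * ∫⁻ ω, ∏ j ∈ s, g j (f j ω) ∂P :=
          lintegral_mul_eq_lintegral_mul_lintegral_of_indepFun hmeas1 hmeas2 hIF2
      _ = (∫⁻ ω, g i (f i ω) ∂P) * ∏ j ∈ s, ∫⁻ ω, g j (f j ω) ∂P := by rw [ih]

lemma CR_pois_term (r : ℝ≥0) (H : ℝ) (hH : 0 ≤ H) (n : ℕ) :
    (ENNReal.ofReal H) ^ n * ENNReal.ofReal (poissonPMFReal r n)
      = ENNReal.ofReal (exp (r * H - r)) * (poissonPMF ((r * H.toNNReal : ℝ≥0)) n) := by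
  have h1 : (poissonPMF ((r * H.toNNReal : ℝ≥0)) n)
      = ENNReal.ofReal (poissonPMFReal ((r * H.toNNReal : ℝ≥0)) n) := rfl
  rw [h1, ← ENNReal.ofReal_pow hH, ← ENNReal.ofReal_mul (pow_nonneg hH n),
    ← ENNReal.ofReal_mul (exp_nonneg _)]
  congr 1
  unfold poissonPMFReal
  push_cast [Real.coe_toNNReal _ hH]
  rw [mul_pow]
  have he : rexp (↑r * H - ↑r) * rexp (-(↑r * H)) = rexp (-(r : ℝ)) := by
    rw [← Real.exp_add]; congr 1; ring
  rw [show rexp (↑r * H - ↑r) * (rexp (-(↑r * H)) * ((r : ℝ) ^ n * H ^ n) / n.factorial)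
      = (rexp (↑r * H - ↑r) * rexp (-(↑r * H))) * ((r : ℝ) ^ n * H ^ n) / n.factorial by ring,
    he]
  ring

lemma CR_pois_sum (r : ℝ≥0) (H : ℝ) (hH : 0 ≤ H) :
    ∑' n : ℕ, (ENNReal.ofReal H) ^ n * ENNReal.ofReal (poissonPMFReal r n)
      = ENNReal.ofReal (exp (r * H - r)) := by
  simp_rw [CR_pois_term r H hH]
  rw [ENNReal.tsum_mul_left, (poissonPMF _).tsum_coe, mul_one]

lemma CR_pois_sum_mean (r : ℝ≥0) (H : ℝ) (hH : 0 ≤ H) :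
    ∑' n : ℕ, (n : ℝ≥0∞) * (ENNReal.ofReal H) ^ n * ENNReal.ofReal (poissonPMFReal r n)
      = (r : ℝ≥0∞) * ENNReal.ofReal H * ENNReal.ofReal (exp (r * H - r)) := by
  have hshift : ∀ n : ℕ, ((n + 1 : ℕ) : ℝ≥0∞) * ENNReal.ofReal (poissonPMFReal r (n + 1))
      = (r : ℝ≥0∞) * ENNReal.ofReal (poissonPMFReal r n) := by
    intro n
    rw [← ENNReal.ofReal_natCast, ← ENNReal.ofReal_mul (by positivity),
      ← ENNReal.ofReal_coe_nnreal, ← ENNReal.ofReal_mul (by positivity)]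
    congr 1
    unfold poissonPMFReal
    rw [Nat.factorial_succ]
    push_cast
    field_simp
    ring
  rw [tsum_eq_zero_add' ENNReal.summable]
  simp only [Nat.cast_zero, zero_mul]
  rw [zero_add]
  have : ∀ n : ℕ, ((n + 1 : ℕ) : ℝ≥0∞) * (ENNReal.ofReal H) ^ (n + 1)
      * ENNReal.ofReal (poissonPMFReal r (n + 1))
      = ((r : ℝ≥0∞) * ENNReal.ofReal H)
        * ((ENNReal.ofReal H) ^ n * ENNReal.ofReal (poissonPMFReal r n)) := by
    intro n
    rw [mul_comm ((n + 1 : ℕ) : ℝ≥0∞) _, mul_assoc, hshift n, pow_succ]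
    ring
  push_cast at this ⊢
  simp_rw [this]
  rw [ENNReal.tsum_mul_left, CR_pois_sum r H hH]

lemma CR_cond_marginal {Ω γ δ : Type*} [MeasurableSpace Ω] [MeasurableSpace γ]
    [MeasurableSpace δ] (P : Measure Ω)
    (Dv : Ω → δ) (Sv : Ω → γ) (hD : Measurable Dv) (hS : Measurable Sv)
    (dens : Ω → ℝ≥0∞) (hdens : Measurable dens) (d : δ)
    (hd : MeasurableSet ({d} : Set δ))
    (hcond : ∀ B : Set γ, MeasurableSet B →
      P ({ω | Dv ω = d} ∩ Sv ⁻¹' B) = ∫⁻ ω in Sv ⁻¹' B, dens ω ∂P)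
    (G : γ → ℝ≥0∞) (hG : Measurable G) :
    ∫⁻ ω in {ω | Dv ω = d}, G (Sv ω) ∂P = ∫⁻ ω, dens ω * G (Sv ω) ∂P := by
  have hmeq : (P.restrict {ω | Dv ω = d}).map Sv = (P.withDensity dens).map Sv := by
    ext B hB
    rw [Measure.map_apply hS hB, Measure.map_apply hS hB,
      Measure.restrict_apply (hS hB), Set.inter_comm, withDensity_apply _ (hS hB)]
    exact hcond B hB
  calc ∫⁻ ω in {ω | Dv ω = d}, G (Sv ω) ∂P
      = ∫⁻ y, G y ∂((P.restrict {ω | Dv ω = d}).map Sv) := (lintegral_map hG hS).symm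
    _ = ∫⁻ y, G y ∂((P.withDensity dens).map Sv) := by rw [hmeq]
    _ = ∫⁻ ω, G (Sv ω) ∂(P.withDensity dens) := lintegral_map hG hS
    _ = ∫⁻ ω, dens ω * G (Sv ω) ∂P := by
        have := lintegral_withDensity_eq_lintegral_mul P hdens (hG.comp hS)
        simpa [Function.comp] using this

lemma CR_measurable_comp_nat {Ω : Type*} [MeasurableSpace Ω] (h : Ω → ℕ) (hh : Measurable h)
    (g : ℕ → Ω → ℕ) (hg : ∀ n, Measurable (g n)) : Measurable fun ω => g (h ω) ω := by
  apply measurable_to_countable'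
  intro m
  have : (fun ω => g (h ω) ω) ⁻¹' {m} = ⋃ n, h ⁻¹' {n} ∩ (g n) ⁻¹' {m} := by
    ext ω
    simp only [Set.mem_preimage, Set.mem_singleton_iff, Set.mem_iUnion, Set.mem_inter_iff]
    constructor
    · intro hm; exact ⟨h ω, rfl, hm⟩
    · rintro ⟨n, rfl, hm⟩; exact hm
  rw [this]
  exact MeasurableSet.iUnion fun n =>
    (hh (measurableSet_singleton n)).inter (hg n (measurableSet_singleton m))

lemma CR_singleton_pi_meas {𝒜 : Type} [Fintype 𝒜] (d : 𝒜 → ℕ) :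
    MeasurableSet ({d} : Set (𝒜 → ℕ)) := by
  have : ({d} : Set (𝒜 → ℕ)) = ⋂ A, (fun c => c A) ⁻¹' {d A} := by
    ext c; simp [funext_iff, Set.mem_iInter, eq_comm]
  rw [this]; exact MeasurableSet.iInter fun A => measurable_pi_apply A (by simp)

end AUX
/-- The CreditRisk+ model with random severities: `P` is a probability measure; the
economic factors `S 0, ..., S N` are independent, `S 0 = 1` is constant and `S (k+1)` is
Gamma distributed with shape `shape k` and rate `rate k` (scale `1 / rate k`);
conditionally on `S` the approximate default indicators `(D A)_A` are independent
Poisson variables with intensities `p_A^S = p A * ∑ k, w A k * S k` (this is expressed by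
the factorization of the joint conditional pmf); for each obligor `A` the exposures
`E A i`, `i = 0, 1, 2, ...` are i.i.d. copies of `ℰ_A := E A 0`, and the whole family of
exposures is mutually independent and independent of `(D, S)`. -/
def IsCRModel {Ω : Type} [MeasurableSpace Ω] (P : Measure Ω) {N : ℕ} {𝒜 : Type}
    [Fintype 𝒜] (S : Fin (N + 1) → Ω → ℝ) (D : 𝒜 → Ω → ℕ) (E : 𝒜 → ℕ → Ω → ℕ)
    (p : 𝒜 → ℝ) (w : 𝒜 → Fin (N + 1) → ℝ) (shape rate : Fin N → ℝ) : Prop :=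
  IsProbabilityMeasure P ∧
  (∀ k, Measurable (S k)) ∧ (∀ A, Measurable (D A)) ∧ (∀ A i, Measurable (E A i)) ∧
  (∀ ω, S 0 ω = 1) ∧
  iIndepFun (m := fun _ => inferInstance) S P ∧
  (∀ k : Fin N, P.map (S k.succ) = gammaMeasure (shape k) (rate k)) ∧
  (∀ (d : 𝒜 → ℕ) (B : Set (Fin (N + 1) → ℝ)), MeasurableSet B →
    P ({ω | ∀ A, D A ω = d A} ∩ {ω | (fun k => S k ω) ∈ B})
      = ∫⁻ ω in {ω | (fun k => S k ω) ∈ B},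
          ∏ A, ENNReal.ofReal
            (poissonPMFReal (p A * ∑ k, w A k * S k ω).toNNReal (d A)) ∂P) ∧
  (∀ A i, P.map (E A i) = P.map (E A 0)) ∧
  iIndepFun (β := fun j : (𝒜 × ℕ) ⊕ Unit =>
      Sum.elim (fun _ => ℕ) (fun _ => ((𝒜 → ℕ) × (Fin (N + 1) → ℝ))) j)
    (m := fun j => Sum.rec (fun _ => inferInstanceAs (MeasurableSpace ℕ))
      (fun _ => inferInstanceAs (MeasurableSpace ((𝒜 → ℕ) × (Fin (N + 1) → ℝ)))) j)
    (fun j => Sum.rec (fun Ai => E Ai.1 Ai.2)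
      (fun _ ω => ((fun A => D A ω), (fun k => S k ω))) j) P

/-- The portfolio loss `X = ∑ A, ∑_{i=1}^{D A} ℰ_{A,i}`. -/
def portfolioLoss {Ω : Type} {𝒜 : Type} [Fintype 𝒜]
    (D : 𝒜 → Ω → ℕ) (E : 𝒜 → ℕ → Ω → ℕ) (ω : Ω) : ℕ :=
  ∑ A, ∑ i ∈ Finset.range (D A ω), E A i ω

/-- The probability generating function `z ↦ 𝔼[z^Y]` of an `ℕ`-valued random variable. -/
noncomputable def pgfN {Ω : Type} [MeasurableSpace Ω] (P : Measure Ω) (Y : Ω → ℕ)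
    (z : ℝ) : ℝ :=
  ∫ ω, z ^ Y ω ∂P

/-- The sector default intensity `μ_k = ∑ A, w A k * p A`. -/
def sectorIntensity {𝒜 : Type} [Fintype 𝒜] {N : ℕ} (p : 𝒜 → ℝ)
    (w : 𝒜 → Fin (N + 1) → ℝ) (k : Fin (N + 1)) : ℝ :=
  ∑ A, w A k * p A

/-- The sector polynomial `Q_k(z) = μ_k⁻¹ * ∑ A, w A k * p A * H_A(z)`, where
`H_A` is the pgf of `ℰ_A = E A 0`. -/
noncomputable def sectorPoly {Ω : Type} {𝒜 : Type} [MeasurableSpace Ω] [Fintype 𝒜]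
    {N : ℕ} (P : Measure Ω) (E : 𝒜 → ℕ → Ω → ℕ) (p : 𝒜 → ℝ)
    (w : 𝒜 → Fin (N + 1) → ℝ) (k : Fin (N + 1)) (z : ℝ) : ℝ :=
  (sectorIntensity p w k)⁻¹ * ∑ A, w A k * p A * pgfN P (E A 0) z

/-- The `j`-th unit vector in `ℝ^N`. -/
def unitVec {N : ℕ} (j : Fin N) : Fin N → ℝ := fun k => if k = j then 1 else 0


/-- For distinct obligors `A1 ≠ A2` and `z ∈ [0,1]`:
`𝔼[D_{A1} D_{A2} z^X] = 𝔼[p_{A1}^S p_{A2}^S z^X] * H_{A1}(z) * H_{A2}(z)`. -/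
theorem double_default_pgf_factorization
    {Ω : Type} {𝒜 : Type} [MeasurableSpace Ω] [Fintype 𝒜] {N : ℕ} (hN : 1 ≤ N)
    (P : Measure Ω) (S : Fin (N + 1) → Ω → ℝ) (D : 𝒜 → Ω → ℕ) (E : 𝒜 → ℕ → Ω → ℕ)
    (p : 𝒜 → ℝ) (w : 𝒜 → Fin (N + 1) → ℝ) (α : Fin N → ℝ)
    (hα : ∀ k, 0 < α k) (hp : ∀ A, 0 ≤ p A)
    (hw0 : ∀ A k, 0 ≤ w A k) (hw1 : ∀ A k, w A k ≤ 1)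
    (hwsum : ∀ A, ∑ k, w A k = 1)
    (hM : IsCRModel P S D E p w α α)
    (A1 A2 : 𝒜) (hA12 : A1 ≠ A2) (z : ℝ) (hz : z ∈ Set.Icc (0 : ℝ) 1) :
    ∫ ω, (D A1 ω : ℝ) * (D A2 ω : ℝ) * z ^ portfolioLoss D E ω ∂P
      = (∫ ω, (p A1 * ∑ k, w A1 k * S k ω) * (p A2 * ∑ k, w A2 k * S k ω)
            * z ^ portfolioLoss D E ω ∂P)
        * pgfN P (E A1 0) z * pgfN P (E A2 0) z := by
  classical
  obtain ⟨hPP, hSm, hDm, hEm, hS0, hSind, hSgam, hDS, hEid, hbig⟩ := hM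
  obtain ⟨hz0, hz1⟩ := hz
  haveI := hPP
  set ζ : ℝ≥0∞ := ENNReal.ofReal z with hζdef
  have hζ1 : ζ ≤ 1 := ENNReal.ofReal_le_one.mpr hz1
  have hlamm : ∀ A : 𝒜, Measurable (fun ω => p A * ∑ k, w A k * S k ω) := fun A =>
    (Finset.measurable_sum Finset.univ fun k _ => (hSm k).const_mul (w A k)).const_mul (p A)
  have hpoism : ∀ (A : 𝒜) (n : ℕ),
      Measurable fun ω => ENNReal.ofReal (poissonPMFReal (p A * ∑ k, w A k * S k ω).toNNReal n) := by
    intro A n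
    have hc : Continuous fun r : ℝ≥0 => poissonPMFReal r n := by
      unfold poissonPMFReal; fun_prop
    exact ENNReal.measurable_ofReal.comp
      (hc.measurable.comp (measurable_real_toNNReal.comp (hlamm A)))
  have hdensm : ∀ d : 𝒜 → ℕ, Measurable fun ω =>
      ∏ A, ENNReal.ofReal (poissonPMFReal (p A * ∑ k, w A k * S k ω).toNNReal (d A)) :=
    fun d => Finset.measurable_prod _ fun A _ => hpoism A (d A)
  have hXm : Measurable fun ω => portfolioLoss D E ω := by
    unfold portfolioLoss
    exact Finset.measurable_sum _ fun A _ =>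
      CR_measurable_comp_nat (D A) (hDm A)
        (fun n ω => ∑ i ∈ Finset.range n, E A i ω)
        (fun n => Finset.measurable_sum _ fun i _ => hEm A i)
  have hζpowm : ∀ (Y : Ω → ℕ), Measurable Y → Measurable fun ω => ζ ^ Y ω := by
    intro Y hY
    exact (measurable_from_top (f := fun n : ℕ => ζ ^ n)).comp hY
  -- pgf facts
  have hpgf : ∀ A : 𝒜, pgfN P (E A 0) z = (∫⁻ ω, ζ ^ E A 0 ω ∂P).toReal := by
    intro A
    unfold pgfN
    rw [integral_eq_lintegral_of_nonneg_ae (ae_of_all _ fun ω => pow_nonneg hz0 _)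
      ((measurable_from_top (f := fun n : ℕ => z ^ n)).comp (hEm A 0)).aestronglyMeasurable]
    congr 1
    refine lintegral_congr fun ω => ?_
    rw [ENNReal.ofReal_pow hz0]
  have hh_le1 : ∀ A : 𝒜, (∫⁻ ω, ζ ^ E A 0 ω ∂P) ≤ 1 := by
    intro A
    calc ∫⁻ ω, ζ ^ E A 0 ω ∂P ≤ ∫⁻ _, 1 ∂P := lintegral_mono fun ω => pow_le_one' hζ1 _
      _ = 1 := by simp
  have hh_ne : ∀ A : 𝒜, (∫⁻ ω, ζ ^ E A 0 ω ∂P) ≠ ⊤ :=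
    fun A => ne_top_of_le_ne_top ENNReal.one_ne_top (hh_le1 A)
  have hofpgf : ∀ A : 𝒜, ENNReal.ofReal (pgfN P (E A 0) z) = ∫⁻ ω, ζ ^ E A 0 ω ∂P := by
    intro A; rw [hpgf A, ENNReal.ofReal_toReal (hh_ne A)]
  have hpgf0 : ∀ A : 𝒜, 0 ≤ pgfN P (E A 0) z := by
    intro A; rw [hpgf A]; exact ENNReal.toReal_nonneg
  -- identically distributed exposures
  have hEi : ∀ (A : 𝒜) (i : ℕ), ∫⁻ ω, ζ ^ E A i ω ∂P = ∫⁻ ω, ζ ^ E A 0 ω ∂P := by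
    intro A i
    have h1 : ∫⁻ ω, ζ ^ E A i ω ∂P = ∫⁻ n, ζ ^ n ∂(P.map (E A i)) :=
      (lintegral_map measurable_from_top (hEm A i)).symm
    rw [h1, hEid A i, lintegral_map measurable_from_top (hEm A 0)]
  -- a.e. nonnegativity of the factors
  have hSnn : ∀ᵐ ω ∂P, ∀ k, 0 ≤ S k ω := by
    rw [ae_all_iff]
    intro k
    induction k using Fin.cases with
    | zero => filter_upwards with ω; rw [hS0 ω]; norm_num
    | succ j =>
      rw [ae_iff]
      have hset : {ω | ¬ 0 ≤ S j.succ ω} = S j.succ ⁻¹' Set.Iio 0 := by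
        ext ω; simp [not_le]
      rw [hset, ← Measure.map_apply (hSm j.succ) measurableSet_Iio, hSgam j]
      show gammaMeasure (α j) (α j) (Set.Iio 0) = 0
      rw [gammaMeasure, withDensity_apply _ measurableSet_Iio]
      exact lintegral_gammaPDF_of_nonpos le_rfl
  have hlamnn : ∀ᵐ ω ∂P, 0 ≤ p A1 * ∑ k, w A1 k * S k ω ∧ 0 ≤ p A2 * ∑ k, w A2 k * S k ω := by
    filter_upwards [hSnn] with ω hω
    refine ⟨?_, ?_⟩ <;>
      exact mul_nonneg (hp _) (Finset.sum_nonneg fun k _ => mul_nonneg (hw0 _ k) (hω k))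
  -- factorization through independence
  have hffm : ∀ j : (𝒜 × ℕ) ⊕ Unit,
      @Measurable _ _ _
        ((fun j => Sum.rec (motive := fun j => MeasurableSpace (Sum.elim (fun _ => ℕ) (fun _ => ((𝒜 → ℕ) × (Fin (N + 1) → ℝ))) j)) (fun _ => inferInstanceAs (MeasurableSpace ℕ))
          (fun _ => inferInstanceAs (MeasurableSpace ((𝒜 → ℕ) × (Fin (N + 1) → ℝ)))) j) j)
        ((fun j => Sum.rec (motive := fun j => Ω → Sum.elim (fun _ => ℕ) (fun _ => ((𝒜 → ℕ) × (Fin (N + 1) → ℝ))) j) (fun Ai => E Ai.1 Ai.2)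
          (fun _ ω => ((fun A => D A ω), (fun k => S k ω))) j) j) := by
    rintro (⟨A, i⟩ | ⟨⟩)
    · exact hEm A i
    · exact Measurable.prodMk (measurable_pi_lambda _ hDm) (measurable_pi_lambda _ hSm)
  have hfact : ∀ (F : ((𝒜 → ℕ) × (Fin (N + 1) → ℝ)) → ℝ≥0∞), Measurable F → ∀ d : 𝒜 → ℕ,
      ∫⁻ ω, F (fun A => D A ω, fun k => S k ω)
          * ∏ A, ∏ i ∈ Finset.range (d A), ζ ^ E A i ω ∂P
        = (∫⁻ ω, F (fun A => D A ω, fun k => S k ω) ∂P)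
          * ∏ A, (∫⁻ ω, ζ ^ E A 0 ω ∂P) ^ d A := by
    intro F hF d
    have hggm : ∀ j : (𝒜 × ℕ) ⊕ Unit,
        @Measurable _ _
          ((fun j => Sum.rec (motive := fun j => MeasurableSpace (Sum.elim (fun _ => ℕ) (fun _ => ((𝒜 → ℕ) × (Fin (N + 1) → ℝ))) j)) (fun _ => inferInstanceAs (MeasurableSpace ℕ))
            (fun _ => inferInstanceAs (MeasurableSpace ((𝒜 → ℕ) × (Fin (N + 1) → ℝ)))) j) j) _
          ((fun j => Sum.rec (motive := fun j =>
              Sum.elim (fun _ => ℕ) (fun _ => ((𝒜 → ℕ) × (Fin (N + 1) → ℝ))) j → ℝ≥0∞)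
            (fun _ (n : ℕ) => ζ ^ n) (fun _ x => F x) j) j) := by
      rintro (⟨A, i⟩ | ⟨⟩)
      · exact measurable_from_top
      · exact hF
    set T : Finset (𝒜 × ℕ) := Finset.univ.biUnion (fun A => {A} ×ˢ Finset.range (d A)) with hTdef
    have hdisjT : ((Finset.univ : Finset 𝒜) : Set 𝒜).PairwiseDisjoint
        (fun A => ({A} : Finset 𝒜) ×ˢ Finset.range (d A)) := by
      intro a _ b _ hab
      apply Finset.disjoint_left.mpr
      rintro ⟨x, y⟩ hx hy
      simp only [Finset.mem_product, Finset.mem_singleton] at hx hy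
      exact hab (hx.1.symm.trans hy.1)
    have hprodT : ∀ u : 𝒜 × ℕ → ℝ≥0∞,
        ∏ x ∈ T, u x = ∏ A, ∏ i ∈ Finset.range (d A), u (A, i) := by
      intro u
      rw [hTdef, Finset.prod_biUnion hdisjT]
      refine Finset.prod_congr rfl fun A _ => ?_
      rw [Finset.prod_product, Finset.prod_singleton]
    have hnotmem : Sum.inr () ∉ T.map ⟨Sum.inl, Sum.inl_injective⟩ := by simp
    have hJ := CR_lintegral_prod
      (fun (j : (𝒜 × ℕ) ⊕ Unit) => Sum.rec (motive := fun j => MeasurableSpace (Sum.elim (fun _ => ℕ) (fun _ => ((𝒜 → ℕ) × (Fin (N + 1) → ℝ))) j)) (fun _ => inferInstanceAs (MeasurableSpace ℕ))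
        (fun _ => inferInstanceAs (MeasurableSpace ((𝒜 → ℕ) × (Fin (N + 1) → ℝ)))) j)
      (fun j => Sum.rec (motive := fun j => Ω → Sum.elim (fun _ => ℕ) (fun _ => ((𝒜 → ℕ) × (Fin (N + 1) → ℝ))) j) (fun Ai => E Ai.1 Ai.2)
        (fun _ ω => ((fun A => D A ω), (fun k => S k ω))) j)
      hbig hffm
      (fun j => Sum.rec (motive := fun j =>
          Sum.elim (fun _ => ℕ) (fun _ => ((𝒜 → ℕ) × (Fin (N + 1) → ℝ))) j → ℝ≥0∞)
        (fun _ (n : ℕ) => ζ ^ n) (fun _ x => F x) j)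
      hggm
      (insert (Sum.inr ()) (T.map ⟨Sum.inl, Sum.inl_injective⟩))
    simp only [Finset.prod_insert hnotmem, Finset.prod_map] at hJ
    calc ∫⁻ ω, F (fun A => D A ω, fun k => S k ω)
            * ∏ A, ∏ i ∈ Finset.range (d A), ζ ^ E A i ω ∂P
        = ∫⁻ ω, F (fun A => D A ω, fun k => S k ω)
            * ∏ x ∈ T, ζ ^ E x.1 x.2 ω ∂P := by
          refine lintegral_congr fun ω => ?_
          rw [hprodT (fun x => ζ ^ E x.1 x.2 ω)]
      _ = (∫⁻ ω, F (fun A => D A ω, fun k => S k ω) ∂P)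
            * ∏ x ∈ T, ∫⁻ ω, ζ ^ E x.1 x.2 ω ∂P := hJ
      _ = (∫⁻ ω, F (fun A => D A ω, fun k => S k ω) ∂P)
            * ∏ A, (∫⁻ ω, ζ ^ E A 0 ω ∂P) ^ d A := by
          congr 1
          rw [hprodT (fun x => ∫⁻ ω, ζ ^ E x.1 x.2 ω ∂P)]
          refine Finset.prod_congr rfl fun A _ => ?_
          calc ∏ i ∈ Finset.range (d A), ∫⁻ ω, ζ ^ E A i ω ∂P
              = ∏ _i ∈ Finset.range (d A), ∫⁻ ω, ζ ^ E A 0 ω ∂P :=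
                Finset.prod_congr rfl fun i _ => hEi A i
            _ = (∫⁻ ω, ζ ^ E A 0 ω ∂P) ^ d A := by
                rw [Finset.prod_const, Finset.card_range]
  -- conditional marginal identity
  have hcondG : ∀ (d : 𝒜 → ℕ) (G : (Fin (N + 1) → ℝ) → ℝ≥0∞), Measurable G →
      ∫⁻ ω, (if (fun A => D A ω) = d then (1 : ℝ≥0∞) else 0) * G (fun k => S k ω) ∂P
        = ∫⁻ ω, (∏ A, ENNReal.ofReal
            (poissonPMFReal (p A * ∑ k, w A k * S k ω).toNNReal (d A)))
            * G (fun k => S k ω) ∂P := by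
    intro d G hG
    have hDv : Measurable (fun ω => (fun A => D A ω)) := measurable_pi_lambda _ hDm
    have hSv : Measurable (fun ω => (fun k => S k ω)) := measurable_pi_lambda _ hSm
    have hcond : ∀ B : Set (Fin (N + 1) → ℝ), MeasurableSet B →
        P ({ω | (fun A => D A ω) = d} ∩ (fun ω => (fun k => S k ω)) ⁻¹' B)
          = ∫⁻ ω in (fun ω => (fun k => S k ω)) ⁻¹' B,
              (∏ A, ENNReal.ofReal
                (poissonPMFReal (p A * ∑ k, w A k * S k ω).toNNReal (d A))) ∂P := by
      intro B hB
      have h1 := hDS d B hB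
      have hseteq : {ω | ∀ A, D A ω = d A} = {ω | (fun A => D A ω) = d} := by
        ext ω; simp [funext_iff]
      rw [hseteq] at h1
      exact h1
    have hAset : MeasurableSet {ω | (fun A => D A ω) = d} :=
      hDv (CR_singleton_pi_meas d)
    have hind : ∀ ω, (if (fun A => D A ω) = d then (1 : ℝ≥0∞) else 0) * G (fun k => S k ω)
        = Set.indicator {ω | (fun A => D A ω) = d} (fun ω => G (fun k => S k ω)) ω := by
      intro ω
      by_cases hωd : (fun A => D A ω) = d <;> simp [Set.indicator, hωd]
    rw [lintegral_congr hind, lintegral_indicator hAset]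
    exact CR_cond_marginal P _ _ hDv hSv _ (hdensm d) d (CR_singleton_pi_meas d) hcond G hG
  have hDv : Measurable (fun ω => (fun A => D A ω)) := measurable_pi_lambda _ hDm
  -- product splitting helpers
  have hA2mem : A2 ∈ Finset.univ.erase A1 :=
    Finset.mem_erase.mpr ⟨fun hc => hA12 hc.symm, Finset.mem_univ A2⟩
  have hsplit : ∀ u : 𝒜 → ℝ≥0∞, ∏ A, u A
      = u A1 * u A2 * ∏ A ∈ (Finset.univ.erase A1).erase A2, u A := by
    intro u
    calc ∏ A, u A = u A1 * ∏ A ∈ Finset.univ.erase A1, u A :=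
          (Finset.mul_prod_erase Finset.univ u (Finset.mem_univ A1)).symm
      _ = u A1 * (u A2 * ∏ A ∈ (Finset.univ.erase A1).erase A2, u A) := by
          rw [← Finset.mul_prod_erase _ u hA2mem]
      _ = u A1 * u A2 * ∏ A ∈ (Finset.univ.erase A1).erase A2, u A := by ring
  have hite : ∀ v : 𝒜 → ℝ≥0∞,
      (∏ A, (if A = A1 ∨ A = A2 then v A else 1)) = v A1 * v A2 := by
    intro v
    rw [hsplit (fun A => if A = A1 ∨ A = A2 then v A else 1)]
    rw [if_pos (Or.inl rfl), if_pos (Or.inr rfl)]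
    have hrest : (∏ x ∈ (Finset.univ.erase A1).erase A2,
        (if x = A1 ∨ x = A2 then v x else 1)) = 1 := by
      refine Finset.prod_eq_one fun x hx => ?_
      simp only [Finset.mem_erase] at hx
      rw [if_neg]
      rintro (h | h)
      · exact hx.2.1 h
      · exact hx.1 h
    rw [hrest, mul_one]
  -- pointwise Poisson sums
  have hpois_plain : ∀ (A : 𝒜) (ω : Ω),
      (∑' n : ℕ, (∫⁻ ω', ζ ^ E A 0 ω' ∂P) ^ n
        * ENNReal.ofReal (poissonPMFReal (p A * ∑ k, w A k * S k ω).toNNReal n))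
      = ENNReal.ofReal (exp ((p A * ∑ k, w A k * S k ω).toNNReal * pgfN P (E A 0) z
          - (p A * ∑ k, w A k * S k ω).toNNReal)) := by
    intro A ω
    rw [← hofpgf A]
    exact CR_pois_sum _ _ (hpgf0 A)
  have hpois_mean : ∀ (A : 𝒜) (ω : Ω),
      (∑' n : ℕ, (n : ℝ≥0∞) * (∫⁻ ω', ζ ^ E A 0 ω' ∂P) ^ n
        * ENNReal.ofReal (poissonPMFReal (p A * ∑ k, w A k * S k ω).toNNReal n))
      = ENNReal.ofReal (p A * ∑ k, w A k * S k ω) * (∫⁻ ω', ζ ^ E A 0 ω' ∂P)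
        * ENNReal.ofReal (exp ((p A * ∑ k, w A k * S k ω).toNNReal * pgfN P (E A 0) z
            - (p A * ∑ k, w A k * S k ω).toNNReal)) := by
    intro A ω
    rw [← hofpgf A]
    exact CR_pois_sum_mean _ _ (hpgf0 A)
  -- decomposition of z^X over default configurations
  have hXprod : ∀ ω, ζ ^ portfolioLoss D E ω
      = ∏ A, ∏ i ∈ Finset.range (D A ω), ζ ^ E A i ω := by
    intro ω
    unfold portfolioLoss
    rw [← Finset.prod_pow_eq_pow_sum]
    exact Finset.prod_congr rfl fun A _ => (Finset.prod_pow_eq_pow_sum _ _ _).symm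
  -- ==================== LHS computation ====================
  have hmeasL : ∀ d : 𝒜 → ℕ, Measurable (fun ω =>
      ((if (fun A => D A ω) = d then (1 : ℝ≥0∞) else 0) * ((d A1 : ℝ≥0∞) * (d A2 : ℝ≥0∞)))
        * ∏ A, ∏ i ∈ Finset.range (d A), ζ ^ E A i ω) := by
    intro d
    refine Measurable.mul (Measurable.mul ?_ measurable_const)
      (Finset.measurable_prod _ fun A _ =>
        Finset.measurable_prod _ fun i _ => hζpowm _ (hEm A i))
    exact Measurable.ite (hDv (CR_singleton_pi_meas d)) measurable_const measurable_const
  have hmeasGL : ∀ d : 𝒜 → ℕ, Measurable (fun ω => ∏ A,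
      ((if A = A1 ∨ A = A2 then (d A : ℝ≥0∞) else 1)
        * ((∫⁻ ω', ζ ^ E A 0 ω' ∂P) ^ d A
          * ENNReal.ofReal (poissonPMFReal (p A * ∑ k, w A k * S k ω).toNNReal (d A))))) := by
    intro d
    exact Finset.measurable_prod _ fun A _ =>
      (measurable_const.mul (measurable_const.mul (hpoism A (d A))))
  have hLHS : ∫⁻ ω, (D A1 ω : ℝ≥0∞) * (D A2 ω : ℝ≥0∞) * ζ ^ portfolioLoss D E ω ∂P
      = ∫⁻ ω, ∏ A, ((if A = A1 ∨ A = A2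
            then ENNReal.ofReal (p A * ∑ k, w A k * S k ω) * (∫⁻ ω', ζ ^ E A 0 ω' ∂P) else 1)
          * ENNReal.ofReal (exp ((p A * ∑ k, w A k * S k ω).toNNReal * pgfN P (E A 0) z
              - (p A * ∑ k, w A k * S k ω).toNNReal))) ∂P := by
    have hLdecomp : ∀ ω : Ω, (D A1 ω : ℝ≥0∞) * (D A2 ω : ℝ≥0∞) * ζ ^ portfolioLoss D E ω
        = ∑' d : 𝒜 → ℕ, ((if (fun A => D A ω) = d then (1 : ℝ≥0∞) else 0)
            * ((d A1 : ℝ≥0∞) * (d A2 : ℝ≥0∞)))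
            * ∏ A, ∏ i ∈ Finset.range (d A), ζ ^ E A i ω := by
      intro ω
      rw [tsum_eq_single (fun A => D A ω) ?_]
      · rw [if_pos rfl, one_mul, hXprod ω]
      · intro d hd
        rw [if_neg (fun hc => hd hc.symm)]
        simp
    calc ∫⁻ ω, (D A1 ω : ℝ≥0∞) * (D A2 ω : ℝ≥0∞) * ζ ^ portfolioLoss D E ω ∂P
        = ∫⁻ ω, ∑' d : 𝒜 → ℕ, ((if (fun A => D A ω) = d then (1 : ℝ≥0∞) else 0)
            * ((d A1 : ℝ≥0∞) * (d A2 : ℝ≥0∞)))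
            * ∏ A, ∏ i ∈ Finset.range (d A), ζ ^ E A i ω ∂P := lintegral_congr hLdecomp
      _ = ∑' d : 𝒜 → ℕ, ∫⁻ ω, ((if (fun A => D A ω) = d then (1 : ℝ≥0∞) else 0)
            * ((d A1 : ℝ≥0∞) * (d A2 : ℝ≥0∞)))
            * ∏ A, ∏ i ∈ Finset.range (d A), ζ ^ E A i ω ∂P :=
          lintegral_tsum fun d => (hmeasL d).aemeasurable
      _ = ∑' d : 𝒜 → ℕ, (∫⁻ ω, (if (fun A => D A ω) = d then (1 : ℝ≥0∞) else 0)
            * ((d A1 : ℝ≥0∞) * (d A2 : ℝ≥0∞)) ∂P)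
            * ∏ A, (∫⁻ ω, ζ ^ E A 0 ω ∂P) ^ d A := by
          refine tsum_congr fun d => ?_
          exact hfact (fun x => (if x.1 = d then (1 : ℝ≥0∞) else 0)
              * ((d A1 : ℝ≥0∞) * (d A2 : ℝ≥0∞)))
            ((Measurable.ite (measurable_fst (CR_singleton_pi_meas d)) measurable_const
              measurable_const).mul measurable_const) d
      _ = ∑' d : 𝒜 → ℕ, (((d A1 : ℝ≥0∞) * (d A2 : ℝ≥0∞)) * ∫⁻ ω, (∏ A, ENNReal.ofReal
            (poissonPMFReal (p A * ∑ k, w A k * S k ω).toNNReal (d A))) ∂P)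
            * ∏ A, (∫⁻ ω, ζ ^ E A 0 ω ∂P) ^ d A := by
          refine tsum_congr fun d => ?_
          congr 1
          rw [hcondG d (fun _ => ((d A1 : ℝ≥0∞) * (d A2 : ℝ≥0∞))) measurable_const]
          rw [lintegral_mul_const _ (hdensm d), mul_comm]
      _ = ∑' d : 𝒜 → ℕ, ∫⁻ ω, ∏ A, ((if A = A1 ∨ A = A2 then (d A : ℝ≥0∞) else 1)
            * ((∫⁻ ω', ζ ^ E A 0 ω' ∂P) ^ d A
              * ENNReal.ofReal (poissonPMFReal (p A * ∑ k, w A k * S k ω).toNNReal (d A)))) ∂P := by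
          refine tsum_congr fun d => ?_
          have hpt : ∀ ω, ∏ A, ((if A = A1 ∨ A = A2 then (d A : ℝ≥0∞) else 1)
              * ((∫⁻ ω', ζ ^ E A 0 ω' ∂P) ^ d A
                * ENNReal.ofReal (poissonPMFReal (p A * ∑ k, w A k * S k ω).toNNReal (d A))))
              = (((d A1 : ℝ≥0∞) * (d A2 : ℝ≥0∞)) * ∏ A, (∫⁻ ω', ζ ^ E A 0 ω' ∂P) ^ d A)
                * ∏ A, ENNReal.ofReal
                  (poissonPMFReal (p A * ∑ k, w A k * S k ω).toNNReal (d A)) := by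
            intro ω
            rw [Finset.prod_mul_distrib, Finset.prod_mul_distrib,
              hite (fun A => (d A : ℝ≥0∞))]
            ring
          rw [lintegral_congr hpt, lintegral_const_mul _ (hdensm d)]
          ring
      _ = ∫⁻ ω, ∑' d : 𝒜 → ℕ, ∏ A, ((if A = A1 ∨ A = A2 then (d A : ℝ≥0∞) else 1)
            * ((∫⁻ ω', ζ ^ E A 0 ω' ∂P) ^ d A
              * ENNReal.ofReal (poissonPMFReal (p A * ∑ k, w A k * S k ω).toNNReal (d A)))) ∂P :=
          (lintegral_tsum fun d => (hmeasGL d).aemeasurable).symm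
      _ = ∫⁻ ω, ∏ A, ∑' n : ℕ, ((if A = A1 ∨ A = A2 then (n : ℝ≥0∞) else 1)
            * ((∫⁻ ω', ζ ^ E A 0 ω' ∂P) ^ n
              * ENNReal.ofReal (poissonPMFReal (p A * ∑ k, w A k * S k ω).toNNReal n))) ∂P :=
          lintegral_congr fun ω => CR_tsum_pi (fun A n =>
            (if A = A1 ∨ A = A2 then (n : ℝ≥0∞) else 1)
              * ((∫⁻ ω', ζ ^ E A 0 ω' ∂P) ^ n
                * ENNReal.ofReal (poissonPMFReal (p A * ∑ k, w A k * S k ω).toNNReal n)))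
      _ = ∫⁻ ω, ∏ A, ((if A = A1 ∨ A = A2
            then ENNReal.ofReal (p A * ∑ k, w A k * S k ω) * (∫⁻ ω', ζ ^ E A 0 ω' ∂P) else 1)
          * ENNReal.ofReal (exp ((p A * ∑ k, w A k * S k ω).toNNReal * pgfN P (E A 0) z
              - (p A * ∑ k, w A k * S k ω).toNNReal))) ∂P := by
          refine lintegral_congr fun ω => Finset.prod_congr rfl fun A _ => ?_
          by_cases hA : A = A1 ∨ A = A2
          · simp only [if_pos hA]
            simp only [← mul_assoc]
            exact hpois_mean A ω
          · simp only [if_neg hA, one_mul]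
            exact hpois_plain A ω
  -- ==================== RHS computation ====================
  have hq1m : Measurable fun x : (𝒜 → ℕ) × (Fin (N + 1) → ℝ) =>
      ENNReal.ofReal (p A1 * ∑ k, w A1 k * x.2 k) :=
    ENNReal.measurable_ofReal.comp
      ((Finset.measurable_sum Finset.univ fun k _ =>
        ((measurable_pi_apply k).comp measurable_snd : Measurable fun x : (𝒜 → ℕ) × (Fin (N + 1) → ℝ) => x.2 k).const_mul (w A1 k)).const_mul (p A1))
  have hq2m : Measurable fun x : (𝒜 → ℕ) × (Fin (N + 1) → ℝ) =>
      ENNReal.ofReal (p A2 * ∑ k, w A2 k * x.2 k) :=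
    ENNReal.measurable_ofReal.comp
      ((Finset.measurable_sum Finset.univ fun k _ =>
        ((measurable_pi_apply k).comp measurable_snd : Measurable fun x : (𝒜 → ℕ) × (Fin (N + 1) → ℝ) => x.2 k).const_mul (w A2 k)).const_mul (p A2))
  have hGsm : Measurable fun s : Fin (N + 1) → ℝ =>
      ENNReal.ofReal (p A1 * ∑ k, w A1 k * s k) * ENNReal.ofReal (p A2 * ∑ k, w A2 k * s k) :=
    Measurable.mul
      (ENNReal.measurable_ofReal.comp
        ((Finset.measurable_sum Finset.univ fun k _ =>
          (measurable_pi_apply k : Measurable fun s : Fin (N + 1) → ℝ => s k).const_mul (w A1 k)).const_mul (p A1)))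
      (ENNReal.measurable_ofReal.comp
        ((Finset.measurable_sum Finset.univ fun k _ =>
          (measurable_pi_apply k : Measurable fun s : Fin (N + 1) → ℝ => s k).const_mul (w A2 k)).const_mul (p A2)))
  have hqωm : Measurable fun ω =>
      ENNReal.ofReal (p A1 * ∑ k, w A1 k * S k ω) * ENNReal.ofReal (p A2 * ∑ k, w A2 k * S k ω) :=
    (ENNReal.measurable_ofReal.comp (hlamm A1)).mul (ENNReal.measurable_ofReal.comp (hlamm A2))
  have hmeasR : ∀ d : 𝒜 → ℕ, Measurable (fun ω =>
      ((if (fun A => D A ω) = d then (1 : ℝ≥0∞) else 0)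
        * (ENNReal.ofReal (p A1 * ∑ k, w A1 k * S k ω)
          * ENNReal.ofReal (p A2 * ∑ k, w A2 k * S k ω)))
        * ∏ A, ∏ i ∈ Finset.range (d A), ζ ^ E A i ω) := by
    intro d
    refine Measurable.mul (Measurable.mul ?_ hqωm)
      (Finset.measurable_prod _ fun A _ =>
        Finset.measurable_prod _ fun i _ => hζpowm _ (hEm A i))
    exact Measurable.ite (hDv (CR_singleton_pi_meas d)) measurable_const measurable_const
  have hmeasGR : ∀ d : 𝒜 → ℕ, Measurable (fun ω =>
      (ENNReal.ofReal (p A1 * ∑ k, w A1 k * S k ω)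
        * ENNReal.ofReal (p A2 * ∑ k, w A2 k * S k ω))
        * ∏ A, ((∫⁻ ω', ζ ^ E A 0 ω' ∂P) ^ d A
          * ENNReal.ofReal (poissonPMFReal (p A * ∑ k, w A k * S k ω).toNNReal (d A)))) := by
    intro d
    exact hqωm.mul (Finset.measurable_prod _ fun A _ => measurable_const.mul (hpoism A (d A)))
  have hRHS : ∫⁻ ω, ENNReal.ofReal (p A1 * ∑ k, w A1 k * S k ω)
        * ENNReal.ofReal (p A2 * ∑ k, w A2 k * S k ω) * ζ ^ portfolioLoss D E ω ∂P
      = ∫⁻ ω, (ENNReal.ofReal (p A1 * ∑ k, w A1 k * S k ω)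
          * ENNReal.ofReal (p A2 * ∑ k, w A2 k * S k ω))
          * ∏ A, ENNReal.ofReal (exp ((p A * ∑ k, w A k * S k ω).toNNReal * pgfN P (E A 0) z
              - (p A * ∑ k, w A k * S k ω).toNNReal)) ∂P := by
    have hRdecomp : ∀ ω : Ω, ENNReal.ofReal (p A1 * ∑ k, w A1 k * S k ω)
        * ENNReal.ofReal (p A2 * ∑ k, w A2 k * S k ω) * ζ ^ portfolioLoss D E ω
        = ∑' d : 𝒜 → ℕ, ((if (fun A => D A ω) = d then (1 : ℝ≥0∞) else 0)
            * (ENNReal.ofReal (p A1 * ∑ k, w A1 k * S k ω)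
              * ENNReal.ofReal (p A2 * ∑ k, w A2 k * S k ω)))
            * ∏ A, ∏ i ∈ Finset.range (d A), ζ ^ E A i ω := by
      intro ω
      rw [tsum_eq_single (fun A => D A ω) ?_]
      · rw [if_pos rfl, one_mul, hXprod ω]
      · intro d hd
        rw [if_neg (fun hc => hd hc.symm)]
        simp
    calc ∫⁻ ω, ENNReal.ofReal (p A1 * ∑ k, w A1 k * S k ω)
          * ENNReal.ofReal (p A2 * ∑ k, w A2 k * S k ω) * ζ ^ portfolioLoss D E ω ∂P
        = ∫⁻ ω, ∑' d : 𝒜 → ℕ, ((if (fun A => D A ω) = d then (1 : ℝ≥0∞) else 0)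
            * (ENNReal.ofReal (p A1 * ∑ k, w A1 k * S k ω)
              * ENNReal.ofReal (p A2 * ∑ k, w A2 k * S k ω)))
            * ∏ A, ∏ i ∈ Finset.range (d A), ζ ^ E A i ω ∂P := lintegral_congr hRdecomp
      _ = ∑' d : 𝒜 → ℕ, ∫⁻ ω, ((if (fun A => D A ω) = d then (1 : ℝ≥0∞) else 0)
            * (ENNReal.ofReal (p A1 * ∑ k, w A1 k * S k ω)
              * ENNReal.ofReal (p A2 * ∑ k, w A2 k * S k ω)))
            * ∏ A, ∏ i ∈ Finset.range (d A), ζ ^ E A i ω ∂P :=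
          lintegral_tsum fun d => (hmeasR d).aemeasurable
      _ = ∑' d : 𝒜 → ℕ, (∫⁻ ω, (if (fun A => D A ω) = d then (1 : ℝ≥0∞) else 0)
            * (ENNReal.ofReal (p A1 * ∑ k, w A1 k * S k ω)
              * ENNReal.ofReal (p A2 * ∑ k, w A2 k * S k ω)) ∂P)
            * ∏ A, (∫⁻ ω, ζ ^ E A 0 ω ∂P) ^ d A := by
          refine tsum_congr fun d => ?_
          exact hfact (fun x => (if x.1 = d then (1 : ℝ≥0∞) else 0)
              * (ENNReal.ofReal (p A1 * ∑ k, w A1 k * x.2 k)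
                * ENNReal.ofReal (p A2 * ∑ k, w A2 k * x.2 k)))
            ((Measurable.ite (measurable_fst (CR_singleton_pi_meas d)) measurable_const
              measurable_const).mul (hq1m.mul hq2m)) d
      _ = ∑' d : 𝒜 → ℕ, (∫⁻ ω, (∏ A, ENNReal.ofReal
            (poissonPMFReal (p A * ∑ k, w A k * S k ω).toNNReal (d A)))
            * (ENNReal.ofReal (p A1 * ∑ k, w A1 k * S k ω)
              * ENNReal.ofReal (p A2 * ∑ k, w A2 k * S k ω)) ∂P)
            * ∏ A, (∫⁻ ω, ζ ^ E A 0 ω ∂P) ^ d A := by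
          refine tsum_congr fun d => ?_
          congr 1
          exact hcondG d (fun s => ENNReal.ofReal (p A1 * ∑ k, w A1 k * s k)
            * ENNReal.ofReal (p A2 * ∑ k, w A2 k * s k)) hGsm
      _ = ∑' d : 𝒜 → ℕ, ∫⁻ ω, ((ENNReal.ofReal (p A1 * ∑ k, w A1 k * S k ω)
            * ENNReal.ofReal (p A2 * ∑ k, w A2 k * S k ω))
            * ∏ A, ((∫⁻ ω', ζ ^ E A 0 ω' ∂P) ^ d A
              * ENNReal.ofReal (poissonPMFReal (p A * ∑ k, w A k * S k ω).toNNReal (d A)))) ∂P := by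
          refine tsum_congr fun d => ?_
          have hmeas0 : Measurable fun ω => (∏ A, ENNReal.ofReal
              (poissonPMFReal (p A * ∑ k, w A k * S k ω).toNNReal (d A)))
              * (ENNReal.ofReal (p A1 * ∑ k, w A1 k * S k ω)
                * ENNReal.ofReal (p A2 * ∑ k, w A2 k * S k ω)) := (hdensm d).mul hqωm
          rw [← lintegral_mul_const _ hmeas0]
          refine lintegral_congr fun ω => ?_
          rw [Finset.prod_mul_distrib]
          ring
      _ = ∫⁻ ω, ∑' d : 𝒜 → ℕ, ((ENNReal.ofReal (p A1 * ∑ k, w A1 k * S k ω)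
            * ENNReal.ofReal (p A2 * ∑ k, w A2 k * S k ω))
            * ∏ A, ((∫⁻ ω', ζ ^ E A 0 ω' ∂P) ^ d A
              * ENNReal.ofReal (poissonPMFReal (p A * ∑ k, w A k * S k ω).toNNReal (d A)))) ∂P :=
          (lintegral_tsum fun d => (hmeasGR d).aemeasurable).symm
      _ = ∫⁻ ω, (ENNReal.ofReal (p A1 * ∑ k, w A1 k * S k ω)
            * ENNReal.ofReal (p A2 * ∑ k, w A2 k * S k ω))
            * ∑' d : 𝒜 → ℕ, ∏ A, ((∫⁻ ω', ζ ^ E A 0 ω' ∂P) ^ d A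
              * ENNReal.ofReal (poissonPMFReal (p A * ∑ k, w A k * S k ω).toNNReal (d A))) ∂P :=
          lintegral_congr fun ω => ENNReal.tsum_mul_left
      _ = ∫⁻ ω, (ENNReal.ofReal (p A1 * ∑ k, w A1 k * S k ω)
            * ENNReal.ofReal (p A2 * ∑ k, w A2 k * S k ω))
            * ∏ A, ∑' n : ℕ, ((∫⁻ ω', ζ ^ E A 0 ω' ∂P) ^ n
              * ENNReal.ofReal (poissonPMFReal (p A * ∑ k, w A k * S k ω).toNNReal n)) ∂P := by
          refine lintegral_congr fun ω => ?_
          congr 1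
          exact CR_tsum_pi (fun A n => (∫⁻ ω', ζ ^ E A 0 ω' ∂P) ^ n
            * ENNReal.ofReal (poissonPMFReal (p A * ∑ k, w A k * S k ω).toNNReal n))
      _ = ∫⁻ ω, (ENNReal.ofReal (p A1 * ∑ k, w A1 k * S k ω)
          * ENNReal.ofReal (p A2 * ∑ k, w A2 k * S k ω))
          * ∏ A, ENNReal.ofReal (exp ((p A * ∑ k, w A k * S k ω).toNNReal * pgfN P (E A 0) z
              - (p A * ∑ k, w A k * S k ω).toNNReal)) ∂P := by
          refine lintegral_congr fun ω => ?_
          congr 1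
          exact Finset.prod_congr rfl fun A _ => hpois_plain A ω
  -- ==================== combining ====================
  have hmeasRint : Measurable fun ω => (ENNReal.ofReal (p A1 * ∑ k, w A1 k * S k ω)
      * ENNReal.ofReal (p A2 * ∑ k, w A2 k * S k ω))
      * ∏ A, ENNReal.ofReal (exp ((p A * ∑ k, w A k * S k ω).toNNReal * pgfN P (E A 0) z
          - (p A * ∑ k, w A k * S k ω).toNNReal)) := by
    refine hqωm.mul (Finset.measurable_prod _ fun A _ => ?_)
    refine ENNReal.measurable_ofReal.comp (Real.continuous_exp.measurable.comp ?_)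
    refine Measurable.sub ?_ ?_
    · exact (measurable_coe_nnreal_real.comp
        (measurable_real_toNNReal.comp (hlamm A))).mul_const _
    · exact measurable_coe_nnreal_real.comp (measurable_real_toNNReal.comp (hlamm A))
  have main : ∫⁻ ω, (D A1 ω : ℝ≥0∞) * (D A2 ω : ℝ≥0∞) * ζ ^ portfolioLoss D E ω ∂P
      = (∫⁻ ω, ENNReal.ofReal (p A1 * ∑ k, w A1 k * S k ω)
          * ENNReal.ofReal (p A2 * ∑ k, w A2 k * S k ω) * ζ ^ portfolioLoss D E ω ∂P)
        * (∫⁻ ω, ζ ^ E A1 0 ω ∂P) * (∫⁻ ω, ζ ^ E A2 0 ω ∂P) := by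
    rw [hLHS, hRHS]
    rw [mul_assoc, ← lintegral_mul_const _ hmeasRint]
    refine lintegral_congr fun ω => ?_
    rw [Finset.prod_mul_distrib]
    rw [hite (fun A => ENNReal.ofReal (p A * ∑ k, w A k * S k ω) * (∫⁻ ω', ζ ^ E A 0 ω' ∂P))]
    ring
  -- ==================== back to real integrals ====================
  have gL : ∫ ω, (D A1 ω : ℝ) * (D A2 ω : ℝ) * z ^ portfolioLoss D E ω ∂P
      = (∫⁻ ω, (D A1 ω : ℝ≥0∞) * (D A2 ω : ℝ≥0∞) * ζ ^ portfolioLoss D E ω ∂P).toReal := by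
    have hm : Measurable fun ω => (D A1 ω : ℝ) * (D A2 ω : ℝ) * z ^ portfolioLoss D E ω :=
      (((measurable_from_top (f := fun n : ℕ => (n : ℝ))).comp (hDm A1)).mul
        ((measurable_from_top (f := fun n : ℕ => (n : ℝ))).comp (hDm A2))).mul
        ((measurable_from_top (f := fun n : ℕ => z ^ n)).comp hXm)
    rw [integral_eq_lintegral_of_nonneg_ae (ae_of_all _ fun ω => by positivity)
      hm.aestronglyMeasurable]
    congr 1
    refine lintegral_congr fun ω => ?_
    rw [ENNReal.ofReal_mul (by positivity), ENNReal.ofReal_mul (by positivity),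
      ENNReal.ofReal_natCast, ENNReal.ofReal_natCast, ENNReal.ofReal_pow hz0]
  have gR : ∫ ω, (p A1 * ∑ k, w A1 k * S k ω) * (p A2 * ∑ k, w A2 k * S k ω)
        * z ^ portfolioLoss D E ω ∂P
      = (∫⁻ ω, ENNReal.ofReal (p A1 * ∑ k, w A1 k * S k ω)
          * ENNReal.ofReal (p A2 * ∑ k, w A2 k * S k ω) * ζ ^ portfolioLoss D E ω ∂P).toReal := by
    have hm : Measurable fun ω => (p A1 * ∑ k, w A1 k * S k ω) * (p A2 * ∑ k, w A2 k * S k ω)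
        * z ^ portfolioLoss D E ω :=
      ((hlamm A1).mul (hlamm A2)).mul
        ((measurable_from_top (f := fun n : ℕ => z ^ n)).comp hXm)
    have hnn : 0 ≤ᵐ[P] fun ω => (p A1 * ∑ k, w A1 k * S k ω) * (p A2 * ∑ k, w A2 k * S k ω)
        * z ^ portfolioLoss D E ω := by
      filter_upwards [hlamnn] with ω hω
      exact mul_nonneg (mul_nonneg hω.1 hω.2) (pow_nonneg hz0 _)
    rw [integral_eq_lintegral_of_nonneg_ae hnn hm.aestronglyMeasurable]
    congr 1
    refine lintegral_congr_ae ?_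
    filter_upwards [hlamnn] with ω hω
    rw [ENNReal.ofReal_mul (mul_nonneg hω.1 hω.2), ENNReal.ofReal_mul hω.1,
      ENNReal.ofReal_pow hz0]
  rw [gL, gR, main, ENNReal.toReal_mul, ENNReal.toReal_mul, hpgf A1, hpgf A2]
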